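/- Let n be a positive integer divisible by 4 and let L be any member of the family F_n of point lists. Then all n points of L have pairwise distinct x-coordinates and pairwise distinct y-coordinates, and both the permutation of list indices obtained by sorting the points of L by x-coordinate and the permutation obtained by sorting by y-coordinate are fixed permutations depending only on n, independent of the choices made in constructing L. Concretely, the x-order is: the points of P_1 in list order, then P_2 in list order, then q_1, …, q_{n/4}, then P_3 in list order; and the y-order is: P_1 in list order, then P_3 in reverse list order, then q_{n/4}, …, q_1, then P_2 in reverse list order. -/

import Mathlib

/-- Membership in the family `F_n` (with `n = 4*m`): four blocks `p1, p2, p3, q` of `m`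
points each, where `p1, p2, p3` lie (in list order, at strictly increasing parameter
values, equivalently with strictly increasing x-coordinate) on the prescribed open
segments, and `q i` (for the mathematical index `i+1 ∈ {1, …, m}`) lies on the open
segment from `(2(i+1)+1, -2(i+1)-1)` to `(2(i+1)+2, -2(i+1))`. -/
def InFamilyF (n m : ℕ) (p1 p2 p3 q : Fin m → ℝ × ℝ) : Prop :=
  (∀ i, p1 i ∈ openSegment ℝ
      (((-2 : ℝ), (-2 * (n : ℝ) - 6)))
      (((0 : ℝ), (-2 * (n : ℝ) - 4)))) ∧
  StrictMono (fun i => (p1 i).1) ∧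
  (∀ i, p2 i ∈ openSegment ℝ (((0 : ℝ), (0 : ℝ))) (((2 : ℝ), (-2 : ℝ)))) ∧
  StrictMono (fun i => (p2 i).1) ∧
  (∀ i, p3 i ∈ openSegment ℝ
      ((2 * (n : ℝ) + 2, -2 * (n : ℝ) - 2))
      ((2 * (n : ℝ) + 4, -2 * (n : ℝ) - 4))) ∧
  StrictMono (fun i => (p3 i).1) ∧
  (∀ i : Fin m, q i ∈ openSegment ℝ
      ((2 * ((i : ℕ) + 1 : ℝ) + 1, -(2 * ((i : ℕ) + 1 : ℝ)) - 1))
      ((2 * ((i : ℕ) + 1 : ℝ) + 2, -(2 * ((i : ℕ) + 1 : ℝ)))))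

/-- For any member of `F_n`, the `4m = n` points have pairwise distinct x-coordinates and
pairwise distinct y-coordinates, the x-sorted order is `P₁, P₂, q₁, …, q_m, P₃`
(each in list order), and the y-sorted order is `P₁`, `P₃` reversed, `q_m, …, q₁`,
`P₂` reversed — both fixed permutations independent of the choices made in `L`. -/
theorem familyF_fixed_sorted_orders
    (n m : ℕ) (hm : 0 < m) (hn : n = 4 * m)
    (p1 p2 p3 q : Fin m → ℝ × ℝ)
    (hF : InFamilyF n m p1 p2 p3 q) :
    List.Chain' (· < ·)
      ((List.ofFn p1 ++ List.ofFn p2 ++ List.ofFn q ++ List.ofFn p3).map Prod.fst) ∧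
    List.Chain' (· < ·)
      ((List.ofFn p1 ++ (List.ofFn p3).reverse ++ (List.ofFn q).reverse ++
        (List.ofFn p2).reverse).map Prod.snd) ∧
    List.Pairwise (fun u v : ℝ × ℝ => u.1 ≠ v.1 ∧ u.2 ≠ v.2)
      (List.ofFn p1 ++ List.ofFn p2 ++ List.ofFn p3 ++ List.ofFn q) := by
  obtain ⟨h1, hs1, h2, hs2, h3, hs3, hq⟩ := hF
  have key1 : ∀ i, -2 < (p1 i).1 ∧ (p1 i).1 < 0 ∧ (p1 i).2 = (p1 i).1 - 2*(n:ℝ) - 4 := by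
    intro i
    obtain ⟨a, b, ha, hb, hab, hp⟩ := h1 i
    simp [Prod.ext_iff] at hp
    obtain ⟨hx, hy⟩ := hp
    refine ⟨by nlinarith, by nlinarith, by nlinarith⟩
  have key2 : ∀ i, 0 < (p2 i).1 ∧ (p2 i).1 < 2 ∧ (p2 i).2 = -(p2 i).1 := by
    intro i
    obtain ⟨a, b, ha, hb, hab, hp⟩ := h2 i
    simp [Prod.ext_iff] at hp
    obtain ⟨hx, hy⟩ := hp
    refine ⟨by nlinarith, by nlinarith, by nlinarith⟩
  have key3 : ∀ i, 2*(n:ℝ)+2 < (p3 i).1 ∧ (p3 i).1 < 2*(n:ℝ)+4 ∧ (p3 i).2 = -(p3 i).1 := by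
    intro i
    obtain ⟨a, b, ha, hb, hab, hp⟩ := h3 i
    simp [Prod.ext_iff] at hp
    obtain ⟨hx, hy⟩ := hp
    refine ⟨by nlinarith, by nlinarith, by nlinarith⟩
  have keyq : ∀ i : Fin m, 2*((i:ℕ):ℝ)+3 < (q i).1 ∧ (q i).1 < 2*((i:ℕ):ℝ)+4 ∧
      (q i).2 = (q i).1 - (4*((i:ℕ):ℝ)+6) := by
    intro i
    obtain ⟨a, b, ha, hb, hab, hp⟩ := hq i
    simp [Prod.ext_iff] at hp
    obtain ⟨hx, hy⟩ := hp
    refine ⟨by nlinarith, by nlinarith, by nlinarith⟩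
  have hnm : (n:ℝ) = 4*(m:ℝ) := by exact_mod_cast congrArg Nat.cast hn
  have hm1 : (1:ℝ) ≤ (m:ℝ) := by exact_mod_cast hm
  have x1gt : ∀ i, (-2:ℝ) < (p1 i).1 := fun i => (key1 i).1
  have x1lt : ∀ i, (p1 i).1 < 0 := fun i => (key1 i).2.1
  have y1 : ∀ i, (p1 i).2 = (p1 i).1 - 2*(n:ℝ) - 4 := fun i => (key1 i).2.2
  have x2gt : ∀ i, (0:ℝ) < (p2 i).1 := fun i => (key2 i).1
  have x2lt : ∀ i, (p2 i).1 < 2 := fun i => (key2 i).2.1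
  have y2 : ∀ i, (p2 i).2 = -(p2 i).1 := fun i => (key2 i).2.2
  have x3gt : ∀ i, 2*(n:ℝ)+2 < (p3 i).1 := fun i => (key3 i).1
  have x3lt : ∀ i, (p3 i).1 < 2*(n:ℝ)+4 := fun i => (key3 i).2.1
  have y3 : ∀ i, (p3 i).2 = -(p3 i).1 := fun i => (key3 i).2.2
  have xqgt : ∀ i : Fin m, 2*((i:ℕ):ℝ)+3 < (q i).1 := fun i => (keyq i).1
  have xqlt : ∀ i : Fin m, (q i).1 < 2*((i:ℕ):ℝ)+4 := fun i => (keyq i).2.1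
  have yq : ∀ i : Fin m, (q i).2 = (q i).1 - (4*((i:ℕ):ℝ)+6) := fun i => (keyq i).2.2
  have hub : ∀ i : Fin m, ((i:ℕ):ℝ)+1 ≤ (m:ℝ) := fun i => by exact_mod_cast i.is_lt
  have hlb : ∀ i : Fin m, (0:ℝ) ≤ ((i:ℕ):ℝ) := fun i => Nat.cast_nonneg _
  have hcast : ∀ {i j : Fin m}, i < j → ((i:ℕ):ℝ)+1 ≤ ((j:ℕ):ℝ) := fun {i j} hij => by
    exact_mod_cast (Fin.lt_def.mp hij)
  simp only [List.map_append, List.map_reverse, List.map_ofFn, List.Chain', List.isChain_iff_pairwise,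
    List.pairwise_append, List.pairwise_reverse, List.pairwise_ofFn, List.mem_append,
    List.mem_reverse, List.mem_ofFn, Set.mem_range, Function.comp]
  refine ⟨⟨⟨⟨?_, ?_, ?_⟩, ?_, ?_⟩, ?_, ?_⟩, ⟨⟨⟨?_, ?_, ?_⟩, ?_, ?_⟩, ?_, ?_⟩,
    ⟨⟨⟨?_, ?_, ?_⟩, ?_, ?_⟩, ?_, ?_⟩⟩
  · exact fun i j hij => hs1 hij
  · exact fun i j hij => hs2 hij
  · rintro a ⟨i, rfl⟩ b ⟨j, rfl⟩
    exact lt_trans (x1lt i) (x2gt j)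
  · intro i j hij
    have := hcast hij
    linarith [xqlt i, xqgt j]
  · rintro a (⟨i, rfl⟩ | ⟨i, rfl⟩) b ⟨j, rfl⟩ <;>
      [skip; skip] <;> linarith [x1lt i, x2lt i, xqgt j, hlb j]
  · exact fun i j hij => hs3 hij
  · rintro a ((⟨i, rfl⟩ | ⟨i, rfl⟩) | ⟨i, rfl⟩) b ⟨j, rfl⟩
    · linarith [x1lt i, x3gt j, hm1]
    · linarith [x2lt i, x3gt j, hm1]
    · linarith [xqlt i, x3gt j, hub i]
  · intro i j hij
    have := hs1 hij
    linarith [y1 i, y1 j, this]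
  · intro i j hij
    have := hs3 hij
    linarith [y3 i, y3 j, this]
  · rintro a ⟨i, rfl⟩ b ⟨j, rfl⟩
    linarith [y1 i, y3 j, x1lt i, x3lt j]
  · intro i j hij
    have := hcast hij
    linarith [yq i, yq j, xqgt i, xqlt j]
  · rintro a (⟨i, rfl⟩ | ⟨i, rfl⟩) b ⟨j, rfl⟩
    · linarith [y1 i, yq j, x1lt i, xqgt j, hub j, hm1]
    · linarith [y3 i, yq j, x3gt i, xqgt j, hub j, hm1]
  · intro i j hij
    have := hs2 hij
    linarith [y2 i, y2 j, this]
  · rintro a ((⟨i, rfl⟩ | ⟨i, rfl⟩) | ⟨i, rfl⟩) b ⟨j, rfl⟩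
    · linarith [y1 i, y2 j, x1lt i, x2lt j, hm1]
    · linarith [y3 i, y2 j, x3gt i, x2lt j, hm1]
    · linarith [yq i, y2 j, xqlt i, x2lt j, hlb i]
  · intro i j hij
    exact ⟨ne_of_lt (hs1 hij), ne_of_lt (by linarith [y1 i, y1 j, hs1 hij])⟩
  · intro i j hij
    exact ⟨ne_of_lt (hs2 hij), ne_of_gt (by linarith [y2 i, y2 j, hs2 hij])⟩
  · rintro a ⟨i, rfl⟩ b ⟨j, rfl⟩
    exact ⟨ne_of_lt (lt_trans (x1lt i) (x2gt j)),
      ne_of_lt (by linarith [y1 i, y2 j, x1lt i, x2lt j, hm1])⟩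
  · intro i j hij
    exact ⟨ne_of_lt (hs3 hij), ne_of_gt (by linarith [y3 i, y3 j, hs3 hij])⟩
  · rintro a (⟨i, rfl⟩ | ⟨i, rfl⟩) b ⟨j, rfl⟩
    · exact ⟨ne_of_lt (by linarith [x1lt i, x3gt j, hm1]),
        ne_of_lt (by linarith [y1 i, y3 j, x1lt i, x3lt j])⟩
    · exact ⟨ne_of_lt (by linarith [x2lt i, x3gt j, hm1]),
        ne_of_gt (by linarith [y2 i, y3 j, x2lt i, x3gt j, hm1])⟩
  · intro i j hij
    have := hcast hij
    exact ⟨ne_of_lt (by linarith [xqlt i, xqgt j]),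
      ne_of_gt (by linarith [yq i, yq j, xqgt i, xqlt j])⟩
  · rintro a ((⟨i, rfl⟩ | ⟨i, rfl⟩) | ⟨i, rfl⟩) b ⟨j, rfl⟩
    · exact ⟨ne_of_lt (by linarith [x1lt i, xqgt j, hlb j]),
        ne_of_lt (by linarith [y1 i, yq j, x1lt i, xqgt j, hub j, hm1])⟩
    · exact ⟨ne_of_lt (by linarith [x2lt i, xqgt j, hlb j]),
        ne_of_gt (by linarith [y2 i, yq j, x2lt i, xqlt j, hlb j])⟩
    · exact ⟨ne_of_gt (by linarith [x3gt i, xqlt j, hub j, hm1]),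
        ne_of_lt (by linarith [y3 i, yq j, x3gt i, xqgt j, hub j, hm1])⟩
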